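/- Let y ∈ ℝ², ξ ≥ r > 0, and let T'_y be a family of r-tubes all containing y, whose directions are (r/ξ)-separated, with |T'_y| ≥ N. Suppose ν is a Borel probability measure on ℝ² with ν(B(x,ρ)) ≤ Cρ^s for all x, ρ, and suppose ν(A(y,ξ,2ξ) ∩ T) ≥ m for all T ∈ T'_y, where A(y,ξ,2ξ) = {z : ξ ≤ |z−y| < 2ξ}. Then N·m ≲ C ξ^s, since the tubes have bounded overlap on ℝ² \ B(y,ξ). -/
import Mathlib


open Metric MeasureTheory Set
open scoped ENNReal NNReal RealInnerProductSpace

noncomputable section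

abbrev E2 := EuclideanSpace ℝ (Fin 2)

/-- Radial projection `π_x(y) = (y-x)/|y-x|`. -/
def radProj {E : Type*} [NormedAddCommGroup E] [NormedSpace ℝ E] (x y : E) : E :=
  ‖y - x‖⁻¹ • (y - x)

/-- A subset of a real vector space is an affine line. -/
def IsAffineLine {E : Type*} [AddCommGroup E] [Module ℝ E] (ℓ : Set E) : Prop :=
  ∃ a v : E, v ≠ 0 ∧ ℓ = {p | ∃ t : ℝ, p = a + t • v}

/-- The (topological) support of a measure. -/
def msupport {E : Type*} [PseudoMetricSpace E] [MeasurableSpace E] (μ : Measure E) : Set E :=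
  {x | ∀ r : ℝ, 0 < r → 0 < μ (ball x r)}

/-- `(μ,ν)` has `(t,K,c)`-thin tubes. -/
def ThinTubesWith (μ ν : Measure E2) (t K c : ℝ) : Prop :=
  ∃ G : Set (E2 × E2), MeasurableSet G ∧ G ⊆ (msupport μ) ×ˢ (msupport ν) ∧
    ENNReal.ofReal c ≤ (μ.prod ν) G ∧
    ∀ x ∈ msupport μ, ∀ r : ℝ, 0 < r → ∀ ℓ : Set E2, IsAffineLine ℓ →
      x ∈ cthickening r ℓ →
      ν (cthickening r ℓ ∩ {y | (x, y) ∈ G}) ≤ ENNReal.ofReal (K * r ^ t)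

/-- `(μ,ν)` has `t`-thin tubes. -/
def ThinTubes (μ ν : Measure E2) (t : ℝ) : Prop :=
  ∃ K c : ℝ, 0 < K ∧ 0 < c ∧ ThinTubesWith μ ν t K c

lemma le_of_sq_le_sq' {a b : ℝ} (ha : 0 ≤ a) (hb : 0 ≤ b) (h : a ^ 2 ≤ b ^ 2) : a ≤ b := by
  nlinarith

lemma scalar_key {qn rξ x : ℝ} (hqn0 : 0 ≤ qn) (hqn : qn ≤ rξ) (hx0 : 0 ≤ x)
    (hx1 : x ≤ 1) (hxe : qn ^ 2 = 1 - x ^ 2) : 2 - 2 * x ≤ (2 * rξ) ^ 2 := by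
  nlinarith

/-- Packing: a `δ`-separated finite set inside a ball of radius `2δ` has at most 36 points. -/
lemma pack_lemma {δ : ℝ} (hδ : 0 < δ) (u : E2) (G : Finset E2)
    (hsep : ∀ a ∈ G, ∀ b ∈ G, a ≠ b → δ ≤ dist a b)
    (hin : ∀ a ∈ G, dist a u ≤ 2 * δ) : G.card ≤ 36 := by
  have hdisj : (↑G : Set E2).PairwiseDisjoint (fun a => ball a (δ / 2)) := by
    intro a ha b hb hab
    exact ball_disjoint_ball (by linarith [hsep a ha b hb hab])
  have hUnion : volume (⋃ a ∈ G, ball a (δ / 2)) = ∑ a ∈ G, volume (ball a (δ / 2)) :=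
    measure_biUnion_finset hdisj fun a _ => measurableSet_ball
  have hsub : (⋃ a ∈ G, ball a (δ / 2)) ⊆ ball u (3 * δ) := by
    intro x hx
    simp only [mem_iUnion] at hx
    obtain ⟨a, ha, hxa⟩ := hx
    rw [mem_ball] at hxa ⊢
    have h1 : dist x u ≤ dist x a + dist a u := dist_triangle _ _ _
    have h2 := hin a ha
    linarith
  have hval : ∀ (a : E2) (ρ : ℝ), 0 ≤ ρ →
      volume (ball a ρ) = ENNReal.ofReal (ρ ^ 2) * volume (ball (0 : E2) 1) := by
    intro a ρ hρ
    rw [MeasureTheory.Measure.addHaar_ball volume a hρ, finrank_euclideanSpace_fin]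
  set V := volume (ball (0 : E2) 1) with hV
  have hV0 : V ≠ 0 := (measure_ball_pos _ _ one_pos).ne'
  have hVt : V ≠ ⊤ := measure_ball_lt_top.ne
  have hmain : (G.card : ℝ≥0∞) * ENNReal.ofReal ((δ / 2) ^ 2) * V ≤
      ENNReal.ofReal ((3 * δ) ^ 2) * V := by
    calc (G.card : ℝ≥0∞) * ENNReal.ofReal ((δ / 2) ^ 2) * V
        = ∑ _a ∈ G, ENNReal.ofReal ((δ / 2) ^ 2) * V := by
          rw [Finset.sum_const, nsmul_eq_mul, mul_assoc]
      _ = ∑ a ∈ G, volume (ball a (δ / 2)) :=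
          Finset.sum_congr rfl fun a _ => (hval a _ (by positivity)).symm
      _ = volume (⋃ a ∈ G, ball a (δ / 2)) := hUnion.symm
      _ ≤ volume (ball u (3 * δ)) := measure_mono hsub
      _ = ENNReal.ofReal ((3 * δ) ^ 2) * V := hval u _ (by positivity)
  have hc1 : (G.card : ℝ≥0∞) * ENNReal.ofReal ((δ / 2) ^ 2) ≤ ENNReal.ofReal ((3 * δ) ^ 2) :=
    (ENNReal.mul_le_mul_iff_left hV0 hVt).mp hmain
  have h9 : ENNReal.ofReal ((3 * δ) ^ 2) = 36 * ENNReal.ofReal ((δ / 2) ^ 2) := by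
    rw [show ((3 : ℝ) * δ) ^ 2 = 36 * (δ / 2) ^ 2 by ring, ENNReal.ofReal_mul (by norm_num)]
    norm_num
  rw [h9] at hc1
  have hofp : ENNReal.ofReal ((δ / 2) ^ 2) ≠ 0 := by
    simp only [ne_eq, ENNReal.ofReal_eq_zero, not_le]
    positivity
  have hoft : ENNReal.ofReal ((δ / 2) ^ 2) ≠ ⊤ := ENNReal.ofReal_ne_top
  have hc2 : (G.card : ℝ≥0∞) ≤ 36 := (ENNReal.mul_le_mul_iff_left hofp hoft).mp hc1
  exact_mod_cast hc2

/-- If `z` is in the `r`-tube around the line through `y` in unit direction `e`, and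
`dist z y ≥ ξ`, then `e` is `2(r/ξ)`-close to the direction of `z - y` or its negative. -/
lemma dir_close {y z e : E2} {r ξ : ℝ} (hr : 0 < r) (hξ : 0 < ξ) (he : ‖e‖ = 1)
    (hz : ξ ≤ dist z y)
    (hzt : z ∈ cthickening r {p : E2 | ∃ t : ℝ, p = y + t • e}) :
    dist e (‖z - y‖⁻¹ • (z - y)) ≤ 2 * (r / ξ) ∨
      dist e (-(‖z - y‖⁻¹ • (z - y))) ≤ 2 * (r / ξ) := by
  set w := z - y with hw
  have hn : ξ ≤ ‖w‖ := by rwa [dist_eq_norm] at hz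
  have hn0 : (0 : ℝ) < ‖w‖ := lt_of_lt_of_le hξ hn
  set c := ⟪w, e⟫ with hc
  set q := ‖w - c • e‖ with hq
  have horth : ⟪w - c • e, e⟫ = 0 := by
    rw [inner_sub_left, real_inner_smul_left, real_inner_self_eq_norm_sq, he]
    ring
  -- the orthogonal distance is at most r
  have hqr : q ≤ r := by
    have h1 : ∀ p ∈ {p : E2 | ∃ t : ℝ, p = y + t • e}, ENNReal.ofReal q ≤ edist z p := by
      rintro p ⟨t, rfl⟩
      rw [edist_dist]
      apply ENNReal.ofReal_le_ofReal
      have hd : dist z (y + t • e) = ‖w - t • e‖ := by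
        rw [dist_eq_norm, hw]
        congr 1
        abel
      rw [hd]
      have hdec : w - t • e = (w - c • e) + (c - t) • e := by
        rw [sub_smul]
        abel
      have hexp : ‖w - t • e‖ ^ 2 = q ^ 2 + (c - t) ^ 2 := by
        rw [hdec, norm_add_sq_real, real_inner_smul_right, horth, norm_smul, he, mul_one,
          ← hq]
        rw [Real.norm_eq_abs, sq_abs]
        ring
      have h2 : q ^ 2 ≤ ‖w - t • e‖ ^ 2 := by nlinarith
      exact le_of_sq_le_sq' (norm_nonneg _) (norm_nonneg _) h2
    have h2 : ENNReal.ofReal q ≤ ENNReal.ofReal r :=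
      (EMetric.le_infEdist.mpr h1).trans (mem_cthickening_iff.mp hzt)
    exact (ENNReal.ofReal_le_ofReal_iff hr.le).mp h2
  -- Pythagoras
  have hpyth : ‖w‖ ^ 2 = c ^ 2 + q ^ 2 := by
    have hdec : w = c • e + (w - c • e) := by abel
    have hcross : ⟪c • e, w - c • e⟫ = 0 := by
      rw [real_inner_smul_left, real_inner_comm, horth]
      ring
    calc ‖w‖ ^ 2 = ‖c • e + (w - c • e)‖ ^ 2 := by rw [← hdec]
      _ = ‖c • e‖ ^ 2 + 2 * ⟪c • e, w - c • e⟫ + ‖w - c • e‖ ^ 2 := norm_add_sq_real _ _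
      _ = c ^ 2 + q ^ 2 := by
          rw [hcross, norm_smul, he, mul_one, Real.norm_eq_abs, sq_abs, ← hq]
          ring
  set n := ‖w‖ with hndef
  have hq0 : 0 ≤ q := norm_nonneg _
  have hcn : |c| ≤ n := by
    have : c ^ 2 ≤ n ^ 2 := by nlinarith
    exact le_of_sq_le_sq' (abs_nonneg c) (le_trans hξ.le hn) (by rwa [sq_abs])
  have hu_norm : ‖n⁻¹ • w‖ = 1 := by
    rw [norm_smul, norm_inv, Real.norm_eq_abs, abs_of_pos hn0]
    exact inv_mul_cancel₀ hn0.ne'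
  have hinner : ⟪e, n⁻¹ • w⟫ = n⁻¹ * c := by
    rw [real_inner_smul_right, real_inner_comm]
  have hqn : (q / n) ^ 2 = 1 - (c / n) ^ 2 := by
    field_simp
    linarith
  have hqrn : q / n ≤ r / ξ := div_le_div₀ hr.le hqr hξ hn
  have hb : (0 : ℝ) ≤ 2 * (r / ξ) := by positivity
  have hqn0' : 0 ≤ q / n := div_nonneg hq0 hn0.le
  have hkey : ∀ x : ℝ, 0 ≤ x → x ≤ 1 → (q / n) ^ 2 = 1 - x ^ 2 →
      2 - 2 * x ≤ (2 * (r / ξ)) ^ 2 :=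
    fun x hx0 hx1 hxe => scalar_key hqn0' hqrn hx0 hx1 hxe
  rcases le_or_gt 0 c with hcpos | hcneg
  · left
    have hdsq : dist e (n⁻¹ • w) ^ 2 = 2 - 2 * (c / n) := by
      rw [dist_eq_norm, norm_sub_sq_real, he, hu_norm, hinner]
      field_simp
      ring
    have hx0 : 0 ≤ c / n := by positivity
    have hx1 : c / n ≤ 1 := by
      rw [div_le_one hn0]
      exact le_trans (le_abs_self c) hcn
    have := hkey (c / n) hx0 hx1 hqn
    exact le_of_sq_le_sq' dist_nonneg hb (by rw [hdsq]; linarith)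
  · right
    have hdsq : dist e (-(n⁻¹ • w)) ^ 2 = 2 - 2 * (-(c / n)) := by
      rw [dist_eq_norm, sub_neg_eq_add, norm_add_sq_real, he, hu_norm, hinner]
      field_simp
      ring
    have hx0 : 0 ≤ -(c / n) := by
      have : c / n ≤ 0 := div_nonpos_of_nonpos_of_nonneg hcneg.le hn0.le
      linarith
    have hx1 : -(c / n) ≤ 1 := by
      have hcn' : -c ≤ n := le_trans (neg_le_abs c) hcn
      rw [← neg_div, div_le_one hn0]
      exact hcn'
    have hqn' : (q / n) ^ 2 = 1 - (-(c / n)) ^ 2 := by rw [neg_pow]; simpa using hqn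
    have := hkey (-(c / n)) hx0 hx1 hqn'
    exact le_of_sq_le_sq' dist_nonneg hb (by rw [hdsq]; linarith)

/-- Covering: the ball of radius `2ξ` has `ν`-measure at most `25 C ξ^s`. -/
lemma cover_lemma {ξ s C : ℝ} (hξ : 0 < ξ)
    (ν : Measure E2)
    (hfrost : ∀ (x : E2) (ρ : ℝ), 0 < ρ → ν (closedBall x ρ) ≤ ENNReal.ofReal (C * ρ ^ s))
    (y : E2) : ν (closedBall y (2 * ξ)) ≤ 25 * ENNReal.ofReal (C * ξ ^ s) := by
  classical
  set P : Finset (ℤ × ℤ) := Finset.Icc (-2) 2 ×ˢ Finset.Icc (-2) 2 with hP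
  set ctr : ℤ × ℤ → E2 := fun p => (WithLp.equiv 2 (Fin 2 → ℝ)).symm
      (fun i => y i + ξ * (if i = 0 then (p.1 : ℝ) else (p.2 : ℝ))) with hctr
  have hctr_apply : ∀ (p : ℤ × ℤ) (i : Fin 2),
      ctr p i = y i + ξ * (if i = 0 then (p.1 : ℝ) else (p.2 : ℝ)) := fun p i => rfl
  have hsub : closedBall y (2 * ξ) ⊆ ⋃ p ∈ P, closedBall (ctr p) ξ := by
    intro z hz
    rw [mem_closedBall] at hz
    have hdistsq : dist z y = Real.sqrt (∑ j, dist (z j) (y j) ^ 2) := EuclideanSpace.dist_eq z y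
    have hcoord : ∀ i : Fin 2, |z i - y i| ≤ 2 * ξ := by
      intro i
      have h2 : dist (z i) (y i) ^ 2 ≤ ∑ j, dist (z j) (y j) ^ 2 :=
        Finset.single_le_sum (f := fun j => dist (z j) (y j) ^ 2)
          (fun j _ => sq_nonneg _) (Finset.mem_univ i)
      have h3 : dist (z i) (y i) ≤ dist z y := by
        rw [hdistsq, ← Real.sqrt_sq dist_nonneg]
        exact Real.sqrt_le_sqrt h2
      rw [Real.dist_eq] at h3
      linarith
    set a : Fin 2 → ℤ := fun i => round ((z i - y i) / ξ) with ha
    have haB : ∀ i, a i ∈ Finset.Icc (-2 : ℤ) 2 := by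
      intro i
      have h1 : |(z i - y i) / ξ| ≤ 2 := by
        rw [abs_div, abs_of_pos hξ, div_le_iff₀ hξ]
        linarith [hcoord i]
      have h2 : |((a i : ℝ))| ≤ 5 / 2 := by
        have h3 : |((a i : ℝ)) - (z i - y i) / ξ| ≤ 1 / 2 := by
          rw [ha, abs_sub_comm]
          exact abs_sub_round _
        calc |((a i : ℝ))| ≤ |((a i : ℝ)) - (z i - y i) / ξ| + |(z i - y i) / ξ| := by
              have := abs_sub_abs_le_abs_sub ((a i : ℝ)) ((z i - y i) / ξ)
              have := abs_add_le ((a i : ℝ) - (z i - y i) / ξ) ((z i - y i) / ξ)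
              simpa using this
          _ ≤ 5 / 2 := by linarith
      have h4 : ((a i : ℝ)) < 3 := lt_of_le_of_lt (le_trans (le_abs_self _) h2) (by norm_num)
      have h5 : (-3 : ℝ) < ((a i : ℝ)) := by
        have := neg_abs_le ((a i : ℝ))
        linarith
      have h4' : a i < 3 := by exact_mod_cast h4
      have h5' : (-3 : ℤ) < a i := by exact_mod_cast h5
      rw [Finset.mem_Icc]
      omega
    have hball : z ∈ closedBall (ctr (a 0, a 1)) ξ := by
      rw [mem_closedBall]
      have hcoordc : ∀ i : Fin 2, dist (z i) (ctr (a 0, a 1) i) ≤ ξ / 2 := by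
        intro i
        rw [hctr_apply, Real.dist_eq]
        have hrd : |(z i - y i) / ξ - (a i : ℝ)| ≤ 1 / 2 := abs_sub_round _
        have hif : (if i = 0 then ((a 0 : ℝ)) else ((a 1 : ℝ))) = ((a i : ℝ)) := by
          fin_cases i <;> simp
        rw [hif]
        have : z i - (y i + ξ * (a i : ℝ)) = ξ * ((z i - y i) / ξ - (a i : ℝ)) := by
          field_simp
          ring
        rw [this, abs_mul, abs_of_pos hξ]
        nlinarith
      have hd : dist z (ctr (a 0, a 1)) = Real.sqrt (∑ j, dist (z j) (ctr (a 0, a 1) j) ^ 2) :=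
        EuclideanSpace.dist_eq _ _
      rw [hd]
      have hsum : ∑ j, dist (z j) (ctr (a 0, a 1) j) ^ 2 ≤ ξ ^ 2 := by
        rw [Fin.sum_univ_two]
        have h0 := hcoordc 0
        have h1 := hcoordc 1
        nlinarith [dist_nonneg (x := z 0) (y := ctr (a 0, a 1) 0),
          dist_nonneg (x := z 1) (y := ctr (a 0, a 1) 1)]
      calc Real.sqrt (∑ j, dist (z j) (ctr (a 0, a 1) j) ^ 2) ≤ Real.sqrt (ξ ^ 2) :=
            Real.sqrt_le_sqrt hsum
        _ = ξ := Real.sqrt_sq hξ.le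
    have hmem : (a 0, a 1) ∈ P := by
      rw [hP, Finset.mem_product]
      exact ⟨haB 0, haB 1⟩
    exact Set.mem_biUnion hmem hball
  have hcard : P.card = 25 := by
    rw [hP, Finset.card_product, Int.card_Icc]
    rfl
  calc ν (closedBall y (2 * ξ)) ≤ ν (⋃ p ∈ P, closedBall (ctr p) ξ) := measure_mono hsub
    _ ≤ ∑ p ∈ P, ν (closedBall (ctr p) ξ) := measure_biUnion_finset_le P _
    _ ≤ ∑ _p ∈ P, ENNReal.ofReal (C * ξ ^ s) :=
        Finset.sum_le_sum fun p _ => hfrost _ _ hξ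
    _ = 25 * ENNReal.ofReal (C * ξ ^ s) := by
        rw [Finset.sum_const, nsmul_eq_mul, hcard]
        norm_num

/-- Radial counting bound: a family of `r`-tubes through `y` with `(r/ξ)`-separated directions,
each carrying `ν`-mass `≥ m` in the annulus `A(y,ξ,2ξ)`, satisfies `N·m ≲ C ξ^s` for an
`s`-Frostman measure `ν`, since such tubes have bounded overlap outside `B(y,ξ)`. -/
theorem separated_tubes_through_point_count :
    ∃ A : ℝ, 0 < A ∧
      ∀ (y : E2) (r ξ s m C : ℝ), 0 < r → r ≤ ξ → 0 < s → 0 ≤ m → 0 < C →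
      ∀ (ν : Measure E2), IsProbabilityMeasure ν →
        (∀ (x : E2) (ρ : ℝ), 0 < ρ → ν (closedBall x ρ) ≤ ENNReal.ofReal (C * ρ ^ s)) →
      ∀ (F : Finset E2), (∀ e ∈ F, ‖e‖ = 1) →
        (∀ e ∈ F, ∀ e' ∈ F, e ≠ e' → r / ξ ≤ dist e e') →
        (∀ e ∈ F, ENNReal.ofReal m ≤
          ν ({z : E2 | ξ ≤ dist z y ∧ dist z y < 2 * ξ} ∩
              cthickening r {p : E2 | ∃ t : ℝ, p = y + t • e})) →
        (F.card : ℝ) * m ≤ A * C * ξ ^ s := by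
  classical
  refine ⟨1800, by norm_num, ?_⟩
  intro y r ξ s m C hr hrξ hs hm hC ν hν hfrost F hunit hsep hmass
  have hξ : 0 < ξ := lt_of_lt_of_le hr hrξ
  set δ := r / ξ with hδdef
  have hδ : 0 < δ := div_pos hr hξ
  set S : E2 → Set E2 := fun e =>
    {z : E2 | ξ ≤ dist z y ∧ dist z y < 2 * ξ} ∩
      cthickening r {p : E2 | ∃ t : ℝ, p = y + t • e} with hS
  have hSm : ∀ e, MeasurableSet (S e) := by
    intro e
    apply MeasurableSet.inter
    · have : {z : E2 | ξ ≤ dist z y ∧ dist z y < 2 * ξ} =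
          {z : E2 | ξ ≤ dist z y} ∩ {z : E2 | dist z y < 2 * ξ} := rfl
      rw [this]
      exact (measurableSet_le measurable_const
          (measurable_dist.comp (measurable_id.prodMk measurable_const))).inter
        (measurableSet_lt (measurable_dist.comp (measurable_id.prodMk measurable_const))
          measurable_const)
    · exact isClosed_cthickening.measurableSet
  have hcount : ∀ z : E2, (F.filter fun e => z ∈ S e).card ≤ 72 := by
    intro z
    by_cases hz : ξ ≤ dist z y
    · set u := ‖z - y‖⁻¹ • (z - y) with hu
      have hsubf : (F.filter fun e => z ∈ S e) ⊆
          (F.filter fun e => dist e u ≤ 2 * δ) ∪ (F.filter fun e => dist e (-u) ≤ 2 * δ) := by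
        intro e he
        rw [Finset.mem_filter] at he
        obtain ⟨heF, hzS⟩ := he
        rcases dir_close hr hξ (hunit e heF) hzS.1.1 hzS.2 with h | h
        · exact Finset.mem_union_left _ (Finset.mem_filter.mpr ⟨heF, h⟩)
        · exact Finset.mem_union_right _ (Finset.mem_filter.mpr ⟨heF, h⟩)
      have hsep' : ∀ (G : Finset E2), (∀ a ∈ G, a ∈ F) → ∀ a ∈ G, ∀ b ∈ G, a ≠ b → δ ≤ dist a b :=
        fun G hG a ha b hb hab => hsep a (hG a ha) b (hG b hb) hab
      have h1 : (F.filter fun e => dist e u ≤ 2 * δ).card ≤ 36 :=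
        pack_lemma hδ u _
          (hsep' _ fun a ha => (Finset.mem_filter.mp ha).1)
          (fun a ha => (Finset.mem_filter.mp ha).2)
      have h2 : (F.filter fun e => dist e (-u) ≤ 2 * δ).card ≤ 36 :=
        pack_lemma hδ (-u) _
          (hsep' _ fun a ha => (Finset.mem_filter.mp ha).1)
          (fun a ha => (Finset.mem_filter.mp ha).2)
      calc (F.filter fun e => z ∈ S e).card
          ≤ ((F.filter fun e => dist e u ≤ 2 * δ) ∪
              (F.filter fun e => dist e (-u) ≤ 2 * δ)).card := Finset.card_le_card hsubf
        _ ≤ (F.filter fun e => dist e u ≤ 2 * δ).card +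
              (F.filter fun e => dist e (-u) ≤ 2 * δ).card := Finset.card_union_le _ _
        _ ≤ 72 := by omega
    · have : (F.filter fun e => z ∈ S e) = ∅ := by
        rw [Finset.filter_eq_empty_iff]
        intro e _ hzS
        exact hz hzS.1.1
      rw [this]
      simp
  have key : (F.card : ℝ≥0∞) * ENNReal.ofReal m ≤ 72 * ν (closedBall y (2 * ξ)) := by
    calc (F.card : ℝ≥0∞) * ENNReal.ofReal m = ∑ _e ∈ F, ENNReal.ofReal m := by
          rw [Finset.sum_const, nsmul_eq_mul]
      _ ≤ ∑ e ∈ F, ν (S e) := Finset.sum_le_sum fun e he => hmass e he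
      _ = ∑ e ∈ F, ∫⁻ z, (S e).indicator 1 z ∂ν :=
          Finset.sum_congr rfl fun e _ => (lintegral_indicator_one (hSm e)).symm
      _ = ∫⁻ z, ∑ e ∈ F, (S e).indicator 1 z ∂ν :=
          (lintegral_finset_sum _ fun e _ => measurable_one.indicator (hSm e)).symm
      _ ≤ ∫⁻ z, 72 * (closedBall y (2 * ξ)).indicator 1 z ∂ν := by
          apply lintegral_mono
          intro z
          dsimp only
          have hsum : ∑ e ∈ F, (S e).indicator (1 : E2 → ℝ≥0∞) z =
              ((F.filter fun e => z ∈ S e).card : ℝ≥0∞) := by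
            rw [Finset.card_filter]
            push_cast
            refine Finset.sum_congr rfl fun e _ => ?_
            by_cases h : z ∈ S e <;> simp [h]
          rw [hsum]
          by_cases hz : z ∈ closedBall y (2 * ξ)
          · rw [indicator_of_mem hz, Pi.one_apply, mul_one]
            exact_mod_cast Nat.cast_le.mpr (hcount z)
          · have : (F.filter fun e => z ∈ S e) = ∅ := by
              rw [Finset.filter_eq_empty_iff]
              intro e _ hzS
              exact hz (mem_closedBall.mpr hzS.1.2.le)
            rw [this, indicator_of_notMem hz]
            simp
      _ = 72 * ∫⁻ z, (closedBall y (2 * ξ)).indicator 1 z ∂ν :=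
          lintegral_const_mul' _ _ (by norm_num)
      _ = 72 * ν (closedBall y (2 * ξ)) := by
          rw [lintegral_indicator_one measurableSet_closedBall]
  have key2 : (F.card : ℝ≥0∞) * ENNReal.ofReal m ≤ ENNReal.ofReal (1800 * C * ξ ^ s) := by
    calc (F.card : ℝ≥0∞) * ENNReal.ofReal m ≤ 72 * ν (closedBall y (2 * ξ)) := key
      _ ≤ 72 * (25 * ENNReal.ofReal (C * ξ ^ s)) :=
          mul_le_mul_right (cover_lemma hξ ν hfrost y) _
      _ = ENNReal.ofReal (1800 * C * ξ ^ s) := by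
          have h1 : ENNReal.ofReal (1800 * C * ξ ^ s) =
              1800 * ENNReal.ofReal (C * ξ ^ s) := by
            rw [show (1800 : ℝ) * C * ξ ^ s = 1800 * (C * ξ ^ s) by ring,
              ENNReal.ofReal_mul (by norm_num : (0:ℝ) ≤ 1800)]
            norm_num
          rw [h1, ← mul_assoc]
          norm_num
  have hfin : ENNReal.ofReal ((F.card : ℝ) * m) ≤ ENNReal.ofReal (1800 * C * ξ ^ s) := by
    rw [ENNReal.ofReal_mul (p := (F.card : ℝ)) (Nat.cast_nonneg _), ENNReal.ofReal_natCast]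
    exact key2
  have hpow : (0 : ℝ) < ξ ^ s := Real.rpow_pos_of_pos hξ s
  have := (ENNReal.ofReal_le_ofReal_iff (by positivity)).mp hfin
  linarith
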